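/- Let x = 1 + j + k and y = 1 + 2i in ℍ(ℚ). Then the relation y x³ y² x y⁻¹ x⁻³ y⁻² x⁻¹ = 1 holds in the multiplicative group of nonzero quaternions. -/

import Mathlib

set_option maxHeartbeats 2000000 in
/-- For `x = 1 + j + k` and `y = 1 + 2i` in `ℍ(ℚ)`, the relation
`y x³ y² x y⁻¹ x⁻³ y⁻² x⁻¹ = 1` holds in the multiplicative group of nonzero
quaternions. -/
theorem relation_one_add_j_add_k_one_add_two_i
    (x y : Quaternion ℚ) (hx : x = ⟨1, 0, 1, 1⟩) (hy : y = ⟨1, 2, 0, 0⟩) :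
    y * x ^ (3 : ℤ) * y ^ (2 : ℤ) * x * y⁻¹ * x ^ (-3 : ℤ) * y ^ (-2 : ℤ) * x⁻¹ = 1 := by
  have mul_mk : ∀ a b c d a' b' c' d' : ℚ,
      (⟨a, b, c, d⟩ * ⟨a', b', c', d'⟩ : Quaternion ℚ) =
        ⟨a * a' - b * b' - c * c' - d * d', a * b' + b * a' + c * d' - d * c',
         a * c' - b * d' + c * a' + d * b', a * d' + b * c' - c * b' + d * a'⟩ := by
    intros; ext
    · exact Quaternion.re_mul _ _
    · exact Quaternion.imI_mul _ _
    · exact Quaternion.imJ_mul _ _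
    · exact Quaternion.imK_mul _ _
  have hxi : x⁻¹ = ⟨1/3, 0, -1/3, -1/3⟩ := by
    apply inv_eq_of_mul_eq_one_right
    rw [hx, mul_mk]; ext <;> norm_num <;> rfl
  have hyi : y⁻¹ = ⟨1/5, -2/5, 0, 0⟩ := by
    apply inv_eq_of_mul_eq_one_right
    rw [hy, mul_mk]; ext <;> norm_num <;> rfl
  have hx3 : x ^ (3 : ℤ) = ⟨-5, 0, 1, 1⟩ := by
    rw [show (3:ℤ) = ((3:ℕ):ℤ) from rfl, zpow_natCast, pow_succ, pow_succ, pow_one, hx,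
      mul_mk, mul_mk]
    ext <;> norm_num
  have hy2 : y ^ (2 : ℤ) = ⟨-3, 4, 0, 0⟩ := by
    rw [show (2:ℤ) = ((2:ℕ):ℤ) from rfl, zpow_natCast, pow_two, hy, mul_mk]
    ext <;> norm_num
  have hx3i : x ^ (-3 : ℤ) = ⟨-5/27, 0, -1/27, -1/27⟩ := by
    rw [show (-3:ℤ) = -3 from rfl, zpow_neg, hx3]
    apply inv_eq_of_mul_eq_one_right
    rw [mul_mk]; ext <;> norm_num <;> rfl
  have hy2i : y ^ (-2 : ℤ) = ⟨-3/25, -4/25, 0, 0⟩ := by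
    rw [show (-2:ℤ) = -2 from rfl, zpow_neg, hy2]
    apply inv_eq_of_mul_eq_one_right
    rw [mul_mk]; ext <;> norm_num <;> rfl
  rw [hx3, hy2, hx3i, hy2i, hxi, hyi, hx, hy, mul_mk, mul_mk, mul_mk, mul_mk, mul_mk,
    mul_mk, mul_mk]
  ext <;> norm_num <;> rfl
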